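/- arXiv:2504.11614 — 8 statements merged into one kernel-verified Lean document; each statement's English description precedes it below -/
import Mathlib

section
/- Let H be a complex Hilbert space and let P and Q be orthogonal projections on H. Suppose λ is a real number with λ ≠ 0 and λ ≠ 1, and there exists a nonzero f ∈ H with PQPf = λf. Then 0 < λ < 1 and both √(1−λ) and −√(1−λ) are eigenvalues of P − Q. -/
local notation "⟪" x ", " y "⟫" => @inner ℂ _ _ x y

/-- If `P, Q` are orthogonal projections on a complex Hilbert space, `λ ≠ 0, 1` is real and
`PQPf = λf` for some nonzero `f`, then `0 < λ < 1` and `±√(1−λ)` are eigenvalues of `P − Q`. -/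
theorem stmt_0 {H : Type*} [NormedAddCommGroup H] [InnerProductSpace ℂ H] [CompleteSpace H]
    (P Q : H →L[ℂ] H)
    (hP : IsSelfAdjoint P) (hP2 : P ∘L P = P)
    (hQ : IsSelfAdjoint Q) (hQ2 : Q ∘L Q = Q)
    (l : ℝ) (hl0 : l ≠ 0) (hl1 : l ≠ 1)
    (f : H) (hf : f ≠ 0) (hPQP : P (Q (P f)) = (l : ℂ) • f) :
    0 < l ∧ l < 1 ∧
      (∃ g : H, g ≠ 0 ∧ (P - Q) g = ((Real.sqrt (1 - l) : ℂ)) • g) ∧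
      (∃ g : H, g ≠ 0 ∧ (P - Q) g = (-(Real.sqrt (1 - l) : ℂ)) • g) := by
  have hPsym : ∀ x y : H, ⟪P x, y⟫ = ⟪x, P y⟫ := fun x y =>
    (ContinuousLinearMap.isSelfAdjoint_iff_isSymmetric.mp hP) x y
  have hQsym : ∀ x y : H, ⟪Q x, y⟫ = ⟪x, Q y⟫ := fun x y =>
    (ContinuousLinearMap.isSelfAdjoint_iff_isSymmetric.mp hQ) x y
  have hlC : (l : ℂ) ≠ 0 := by exact_mod_cast hl0
  have hP2' : ∀ x, P (P x) = P x := fun x => by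
    have := congrFun (congrArg DFunLike.coe hP2) x
    simpa using this
  have hQ2' : ∀ x, Q (Q x) = Q x := fun x => by
    have := congrFun (congrArg DFunLike.coe hQ2) x
    simpa using this
  have hPf : P f = f := by
    have h1 : P (P (Q (P f))) = (l : ℂ) • P f := by rw [hPQP, map_smul]
    have h2 : P (P (Q (P f))) = (l : ℂ) • f := by rw [hP2', hPQP]
    exact (smul_right_injective H hlC (h2.symm.trans h1)).symm
  have hPQf : P (Q f) = (l : ℂ) • f := by rw [← hPQP, hPf]
  have hQQf : Q (Q f) = Q f := hQ2' f
  -- inner product identity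
  have key : (l : ℂ) * (‖f‖ : ℂ) ^ 2 = (‖Q f‖ : ℂ) ^ 2 := by
    have h1 : ⟪f, P (Q f)⟫ = (l : ℂ) * ⟪f, f⟫ := by rw [hPQf, inner_smul_right]
    have h2 : ⟪f, P (Q f)⟫ = ⟪Q f, Q f⟫ := by
      rw [← hPsym f (Q f), hPf]
      conv_lhs => rw [← hQQf]
      rw [← hQsym f (Q f)]
    rw [h2] at h1
    rw [inner_self_eq_norm_sq_to_K, inner_self_eq_norm_sq_to_K] at h1
    exact h1.symm
  have keyR : l * ‖f‖ ^ 2 = ‖Q f‖ ^ 2 := by exact_mod_cast key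
  have hfpos : 0 < ‖f‖ := norm_pos_iff.mpr hf
  have hf2pos : 0 < ‖f‖ ^ 2 := by positivity
  have hl_nonneg : 0 ≤ l := by nlinarith [sq_nonneg (‖Q f‖)]
  have hlpos : 0 < l := lt_of_le_of_ne hl_nonneg (Ne.symm hl0)
  have hQle : ‖Q f‖ ≤ ‖f‖ := by
    rcases eq_or_ne (Q f) 0 with h | h
    · simp [h, le_of_lt hfpos]
    · have h1 : ‖⟪f, Q f⟫‖ ≤ ‖f‖ * ‖Q f‖ := norm_inner_le_norm _ _
      have h2 : ⟪f, Q f⟫ = (‖Q f‖ : ℂ) ^ 2 := by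
        conv_lhs => rw [← hQQf]
        rw [← hQsym f (Q f)]
        exact inner_self_eq_norm_sq_to_K (𝕜 := ℂ) (x := Q f)
      rw [h2] at h1
      have h3 : ‖((‖Q f‖ : ℂ)) ^ 2‖ = ‖Q f‖ ^ 2 := by
        rw [norm_pow, Complex.norm_real, Real.norm_of_nonneg (norm_nonneg _)]
      rw [h3] at h1
      have hQpos : 0 < ‖Q f‖ := norm_pos_iff.mpr h
      nlinarith
  have hllt : l < 1 := by
    have h2 : ‖Q f‖ ^ 2 ≤ ‖f‖ ^ 2 := by nlinarith [norm_nonneg (Q f)]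
    rcases lt_or_eq_of_le (show l ≤ 1 by nlinarith) with h | h
    · exact h
    · exact absurd h hl1
  -- eigenvectors
  set μ := Real.sqrt (1 - l) with hμdef
  have hμ2 : μ ^ 2 = 1 - l := Real.sq_sqrt (by linarith)
  have hμpos : 0 < μ := Real.sqrt_pos.mpr (by linarith)
  have hμ1 : μ ≠ 1 := by
    intro h
    rw [h, one_pow] at hμ2
    exact hl0 (by linarith)
  have hc0 : (μ : ℂ) ≠ 0 := by exact_mod_cast hμpos.ne'
  have hc2 : (μ : ℂ) * (μ : ℂ) = 1 - (l : ℂ) := by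
    have h : ((μ ^ 2 : ℝ) : ℂ) = ((1 - l : ℝ) : ℂ) := by rw [hμ2]
    push_cast at h
    linear_combination h
  refine ⟨hlpos, hllt, ?_, ?_⟩
  · refine ⟨(μ : ℂ) • f + (f - Q f), ?_, ?_⟩
    · intro h
      have h1 : Q f = (1 + (μ : ℂ)) • f := by
        have h' := sub_eq_zero.mpr h.symm
        rw [show (0 : H) - ((μ : ℂ) • f + (f - Q f)) = Q f - (1 + (μ:ℂ)) • f by
          rw [add_smul, one_smul]; abel] at h'
        exact sub_eq_zero.mp h'
      have h2 : (1 + (μ : ℂ)) • f = (1 + (μ : ℂ)) • (1 + (μ : ℂ)) • f := by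
        conv_lhs => rw [← h1, ← hQQf, h1, map_smul, h1]
      have h3 : ((1 + (μ:ℂ)) - (1 + (μ:ℂ)) * (1 + (μ:ℂ))) • f = 0 := by
        rw [sub_smul, ← smul_smul, ← h2, sub_self]
      rcases smul_eq_zero.mp h3 with h4 | h4
      · have h5 : (1 + (μ:ℂ)) * (1 - (1 + (μ:ℂ))) = 0 := by linear_combination h4
        rcases mul_eq_zero.mp h5 with h6 | h6
        · have h7 : (μ : ℝ) = -1 := by
            have : (μ : ℂ) = -1 := by linear_combination h6
            exact_mod_cast this
          linarith
        · have h7 : (μ : ℂ) = 0 := by linear_combination -h6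
          exact hc0 h7
      · exact hf h4
    · simp only [ContinuousLinearMap.sub_apply, map_add, map_sub, map_smul, hPf, hPQf, hQQf]
      match_scalars <;> first | ring1 | linear_combination hc2 | linear_combination -hc2 | linear_combination (2:ℂ)*hc2 | linear_combination (-2:ℂ)*hc2
  · refine ⟨(-(μ : ℂ)) • f + (f - Q f), ?_, ?_⟩
    · intro h
      have h1 : Q f = (1 - (μ : ℂ)) • f := by
        have h' := sub_eq_zero.mpr h.symm
        rw [show (0 : H) - ((-(μ : ℂ)) • f + (f - Q f)) = Q f - (1 - (μ:ℂ)) • f by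
          rw [sub_smul, one_smul, neg_smul]; abel] at h'
        exact sub_eq_zero.mp h'
      have h2 : (1 - (μ : ℂ)) • f = (1 - (μ : ℂ)) • (1 - (μ : ℂ)) • f := by
        conv_lhs => rw [← h1, ← hQQf, h1, map_smul, h1]
      have h3 : ((1 - (μ:ℂ)) - (1 - (μ:ℂ)) * (1 - (μ:ℂ))) • f = 0 := by
        rw [sub_smul, ← smul_smul, ← h2, sub_self]
      rcases smul_eq_zero.mp h3 with h4 | h4
      · have h5 : (1 - (μ:ℂ)) * (μ:ℂ) = 0 := by linear_combination h4
        rcases mul_eq_zero.mp h5 with h6 | h6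
        · have h7 : (μ : ℝ) = 1 := by
            have : (μ : ℂ) = 1 := by linear_combination -h6
            exact_mod_cast this
          exact hμ1 h7
        · exact hc0 h6
      · exact hf h4
    · simp only [ContinuousLinearMap.sub_apply, map_add, map_sub, map_smul, hPf, hPQf, hQQf]
      match_scalars <;> first | ring1 | linear_combination hc2 | linear_combination -hc2 | linear_combination (2:ℂ)*hc2 | linear_combination (-2:ℂ)*hc2
end

section
/- Let H be a complex Hilbert space and let P and Q be orthogonal projections on H. If μ is an eigenvalue of P − Q with μ ≠ 0, μ ≠ 1 and μ ≠ −1, then 1 − μ² is an eigenvalue of PQP. -/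
/-- If `P, Q` are orthogonal projections and `μ ≠ 0, 1, −1` is an eigenvalue of `P − Q`,
then `1 − μ²` is an eigenvalue of `PQP`. -/
theorem stmt_1 {H : Type*} [NormedAddCommGroup H] [InnerProductSpace ℂ H] [CompleteSpace H]
    (P Q : H →L[ℂ] H)
    (hP : IsSelfAdjoint P) (hP2 : P ∘L P = P)
    (hQ : IsSelfAdjoint Q) (hQ2 : Q ∘L Q = Q)
    (μ : ℂ) (hμ0 : μ ≠ 0) (hμ1 : μ ≠ 1) (hμm1 : μ ≠ -1)
    (g : H) (hg : g ≠ 0) (heig : (P - Q) g = μ • g) :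
    ∃ f : H, f ≠ 0 ∧ P (Q (P f)) = (1 - μ ^ 2) • f := by
  have hPP : ∀ x : H, P (P x) = P x := fun x => congrFun (congrArg DFunLike.coe hP2) x
  have hQQ : ∀ x : H, Q (Q x) = Q x := fun x => congrFun (congrArg DFunLike.coe hQ2) x
  have heig' : P g - Q g = μ • g := by simpa using heig
  -- P Q g = (1 - μ) • P g
  have hPQg : P (Q g) = (1 - μ) • P g := by
    have h := congrArg P heig'
    rw [map_sub, map_smul, hPP] at h
    have : P (Q g) = P g - μ • P g := by
      have := sub_eq_iff_eq_add.mp h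
      linear_combination (norm := module) -this
    rw [this]; module
  -- Q P g = (1 + μ) • Q g
  have hQPg : Q (P g) = (1 + μ) • Q g := by
    have h := congrArg Q heig'
    rw [map_sub, map_smul, hQQ] at h
    have : Q (P g) = Q g + μ • Q g := by linear_combination (norm := module) h
    rw [this]; module
  have hPg : P g ≠ 0 := by
    intro h0
    have hQg : Q g = -(μ • g) := by
      have := heig'
      rw [h0] at this
      linear_combination (norm := module) -this
    have h2 : Q (Q g) = Q g := hQQ g
    rw [hQg] at h2
    rw [map_neg, map_smul, hQg] at h2
    have : (μ * μ - (-μ)) • g = 0 := by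
      have : μ • μ • g - (-(μ • g)) = 0 := by linear_combination (norm := module) h2
      rw [smul_smul] at this
      linear_combination (norm := module) this
    have hcoef : μ * μ - (-μ) ≠ 0 := by
      intro h
      have : μ * (μ + 1) = 0 := by ring_nf; linear_combination h
      rcases mul_eq_zero.mp this with h | h
      · exact hμ0 h
      · exact hμm1 (by linear_combination h)
    rcases smul_eq_zero.mp this with h | h
    · exact hcoef h
    · exact hg h
  refine ⟨P g, hPg, ?_⟩
  rw [hPP, hQPg, map_smul, hPQg, smul_smul]
  congr 1
  ring
end

section
/- Let H be a complex Hilbert space and let P and Q be orthogonal projections on H. If λ is an eigenvalue of P − Q with 0 < |λ| < 1, then both 1 + √(1−λ²) and 1 − √(1−λ²) are eigenvalues of P + Q. -/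
/-- If `λ` is an eigenvalue of `P − Q` with `0 < |λ| < 1`, then `1 ± √(1−λ²)` are
eigenvalues of `P + Q`. -/
theorem stmt_3 {H : Type*} [NormedAddCommGroup H] [InnerProductSpace ℂ H] [CompleteSpace H]
    (P Q : H →L[ℂ] H)
    (hP : IsSelfAdjoint P) (hP2 : P ∘L P = P)
    (hQ : IsSelfAdjoint Q) (hQ2 : Q ∘L Q = Q)
    (l : ℝ) (hl0 : 0 < |l|) (hl1 : |l| < 1)
    (g : H) (hg : g ≠ 0) (heig : (P - Q) g = (l : ℂ) • g) :
    (∃ f : H, f ≠ 0 ∧ (P + Q) f = ((1 + Real.sqrt (1 - l ^ 2) : ℝ) : ℂ) • f) ∧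
    (∃ f : H, f ≠ 0 ∧ (P + Q) f = ((1 - Real.sqrt (1 - l ^ 2) : ℝ) : ℂ) • f) := by
  have hp : P * P = P := hP2
  have hq : Q * Q = Q := hQ2
  have hlne : (l : ℂ) ≠ 0 := by
    exact_mod_cast (abs_pos.mp hl0)
  have hl2 : 0 < 1 - l ^ 2 := by nlinarith [sq_abs l, abs_nonneg l]
  set s : ℝ := Real.sqrt (1 - l ^ 2) with hsdef
  have hspos : 0 < s := Real.sqrt_pos.mpr hl2
  have hsne : (s : ℂ) ≠ 0 := by exact_mod_cast hspos.ne'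
  have hs2r : s ^ 2 = 1 - l ^ 2 := Real.sq_sqrt hl2.le
  have hs2 : (s : ℂ) ^ 2 = 1 - (l : ℂ) ^ 2 := by exact_mod_cast hs2r
  set A : H →L[ℂ] H := P - Q with hA
  set T : H →L[ℂ] H := P + Q - 1 with hT
  have hkey : A * A + T * T = 1 := by
    have h1 : A * A + T * T = 2 * (P * P) + 2 * (Q * Q) - 2 * P - 2 * Q + 1 := by
      rw [hA, hT]; noncomm_ring
    rw [h1, hp, hq]; noncomm_ring
  have hanti : A * T + T * A = 0 := by
    have h1 : A * T + T * A = 2 * (P * P) - 2 * (Q * Q) - 2 * P + 2 * Q := by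
      rw [hA, hT]; noncomm_ring
    rw [h1, hp, hq]; noncomm_ring
  have hAg : A g = (l : ℂ) • g := heig
  have hAAg : A (A g) = ((l : ℂ) ^ 2) • g := by
    rw [hAg, map_smul, hAg, smul_smul, ← sq]
  have hTTg : T (T g) = ((s : ℂ) ^ 2) • g := by
    have h := congrArg (fun X : H →L[ℂ] H => X g) hkey
    simp only [ContinuousLinearMap.add_apply, ContinuousLinearMap.mul_apply,
      ContinuousLinearMap.one_apply] at h
    rw [hAAg] at h
    rw [hs2, sub_smul, one_smul]
    exact eq_sub_of_add_eq' h
  have hantig : ∀ x : H, A (T x) + T (A x) = 0 := by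
    intro x
    have h := congrArg (fun X : H →L[ℂ] H => X x) hanti
    simpa using h
  -- generic construction for both signs
  have main : ∀ c : ℂ, c ^ 2 = (s : ℂ) ^ 2 → c ≠ 0 →
      (T g + c • g ≠ 0 ∧ (P + Q) (T g + c • g) = (1 + c) • (T g + c • g)) := by
    intro c hc2 hcne
    have hTf : T (T g + c • g) = c • (T g + c • g) := by
      rw [map_add, map_smul, hTTg, ← hc2, smul_add, smul_smul, ← sq, add_comm]
    constructor
    · intro h
      have hTg : T g = -(c • g) := by
        rwa [add_eq_zero_iff_eq_neg] at h
      have h2 := hantig g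
      rw [hAg, map_smul, hTg, map_neg, map_smul, hAg] at h2
      rw [smul_neg, smul_smul, ← neg_add, neg_eq_zero] at h2
      have h3 : (c * (l : ℂ) + (l : ℂ) * c) • g = 0 := by
        rw [smul_smul] at h2; rw [add_smul]; exact h2
      have h4 : (c * (l : ℂ) + (l : ℂ) * c) = 0 ∨ g = 0 := smul_eq_zero.mp h3
      rcases h4 with h4 | h4
      · have : c * l = 0 := by linear_combination h4 / 2
        rcases mul_eq_zero.mp this with h | h
        · exact hcne h
        · exact hlne h
      · exact hg h4
    · have hPQ : ∀ x : H, (P + Q) x = T x + x := by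
        intro x
        simp [hT, ContinuousLinearMap.sub_apply]
      rw [hPQ, hTf, add_smul, one_smul, add_comm]
  have h1 := main (s : ℂ) rfl hsne
  have h2 := main (-(s : ℂ)) (by ring) (neg_ne_zero.mpr hsne)
  constructor
  · refine ⟨T g + (s : ℂ) • g, h1.1, ?_⟩
    rw [h1.2]
    norm_cast
  · refine ⟨T g + (-(s : ℂ)) • g, h2.1, ?_⟩
    rw [h2.2]
    congr 1
    push_cast
    ring
end

section
/- Let H be a complex Hilbert space and let P and Q be orthogonal projections on H. If μ is an eigenvalue of P + Q with 0 < μ < 2 and μ ≠ 1, then both √(1−(μ−1)²) and −√(1−(μ−1)²) are eigenvalues of P − Q. -/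
/-- If `μ` is an eigenvalue of `P + Q` with `0 < μ < 2`, `μ ≠ 1`, then `±√(1−(μ−1)²)` are
eigenvalues of `P − Q`. -/
theorem stmt_4 {H : Type*} [NormedAddCommGroup H] [InnerProductSpace ℂ H] [CompleteSpace H]
    (P Q : H →L[ℂ] H)
    (hP : IsSelfAdjoint P) (hP2 : P ∘L P = P)
    (hQ : IsSelfAdjoint Q) (hQ2 : Q ∘L Q = Q)
    (μ : ℝ) (hμ0 : 0 < μ) (hμ2 : μ < 2) (hμ1 : μ ≠ 1)
    (g : H) (hg : g ≠ 0) (heig : (P + Q) g = (μ : ℂ) • g) :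
    (∃ f : H, f ≠ 0 ∧ (P - Q) f = ((Real.sqrt (1 - (μ - 1) ^ 2) : ℝ) : ℂ) • f) ∧
    (∃ f : H, f ≠ 0 ∧ (P - Q) f = ((-Real.sqrt (1 - (μ - 1) ^ 2) : ℝ) : ℂ) • f) := by
  have hPg : P (P g) = P g := by
    have := congrArg (fun T : H →L[ℂ] H => T g) hP2; simpa using this
  have hQg : Q (Q g) = Q g := by
    have := congrArg (fun T : H →L[ℂ] H => T g) hQ2; simpa using this
  have huv : P g + Q g = (μ : ℂ) • g := by simpa using heig
  have hv : Q g = (μ : ℂ) • g - P g := by rw [← huv]; abel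
  have hu : P g = (μ : ℂ) • g - Q g := by rw [← huv]; abel
  have hPQ : P (Q g) = ((μ : ℂ) - 1) • P g := by
    rw [hv, map_sub, map_smul, hPg]; module
  have hQP : Q (P g) = ((μ : ℂ) - 1) • Q g := by
    rw [hu, map_sub, map_smul, hQg]; module
  have hDg : (P - Q) g = P g - Q g := rfl
  have hexp : (P - Q) ((P - Q) g) = P (P g) - P (Q g) - Q (P g) + Q (Q g) := by
    simp only [ContinuousLinearMap.sub_apply, map_sub]; abel
  have hD2 : (P - Q) ((P - Q) g) = ((μ : ℂ) * (2 - μ)) • g := by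
    rw [hexp, hPg, hQg, hPQ, hQP]
    have h1 : P g - ((μ : ℂ) - 1) • P g - ((μ : ℂ) - 1) • Q g + Q g
        = ((2 : ℂ) - μ) • (P g + Q g) := by module
    rw [h1, huv, smul_smul]
    congr 1; ring
  have hADexp : (P + Q) ((P - Q) g) = P (P g) - P (Q g) + Q (P g) - Q (Q g) := by
    simp only [ContinuousLinearMap.add_apply, ContinuousLinearMap.sub_apply, map_sub]; abel
  have hAD : (P + Q) ((P - Q) g) = ((2 : ℂ) - μ) • ((P - Q) g) := by
    rw [hADexp, hPg, hQg, hPQ, hQP, hDg]; module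
  have hμC : (μ : ℂ) ≠ 1 := by
    intro h; apply hμ1; exact_mod_cast h
  have key : ∀ c : ℂ, c ^ 2 = (μ : ℂ) * (2 - μ) → c ≠ 0 →
      ∃ f : H, f ≠ 0 ∧ (P - Q) f = c • f := by
    intro c hc2 hc
    refine ⟨(P - Q) g + c • g, ?_, ?_⟩
    · intro h0
      have hDgeq : (P - Q) g = (-c) • g := by
        rw [neg_smul, eq_neg_iff_add_eq_zero]; exact h0
      have h1 : ((-c) * μ) • g = ((2 : ℂ) - μ) • ((-c) • g) := by
        calc ((-c) * μ) • g = (-c) • ((μ : ℂ) • g) := by rw [smul_smul]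
          _ = (-c) • ((P + Q) g) := by rw [heig]
          _ = (P + Q) ((-c) • g) := by rw [map_smul]
          _ = (P + Q) ((P - Q) g) := by rw [← hDgeq]
          _ = ((2 : ℂ) - μ) • ((P - Q) g) := hAD
          _ = ((2 : ℂ) - μ) • ((-c) • g) := by rw [hDgeq]
      have h2 : (c * (2 - 2 * μ)) • g = 0 := by
        have := sub_eq_zero_of_eq h1
        rw [smul_smul, ← sub_smul] at this
        convert this using 2; ring
      rcases smul_eq_zero.mp h2 with h | h
      · rcases mul_eq_zero.mp h with h' | h'
        · exact hc h'
        · apply hμC; linear_combination (-1/2 : ℂ) * h'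
      · exact hg h
    · rw [map_add, map_smul, hD2, ← hc2]
      module
  have hnonneg : (0 : ℝ) < 1 - (μ - 1) ^ 2 := by nlinarith
  set lam := Real.sqrt (1 - (μ - 1) ^ 2) with hlam
  have hlam_pos : 0 < lam := Real.sqrt_pos.mpr hnonneg
  have hlam_sq : lam ^ 2 = μ * (2 - μ) := by
    rw [hlam, Real.sq_sqrt hnonneg.le]; ring
  have hc2 : ((lam : ℂ)) ^ 2 = (μ : ℂ) * (2 - μ) := by exact_mod_cast hlam_sq
  have hcne : (lam : ℂ) ≠ 0 := by exact_mod_cast hlam_pos.ne'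
  constructor
  · exact key (lam : ℂ) hc2 hcne
  · have := key (-(lam : ℂ)) (by rw [neg_pow]; simpa using hc2) (neg_ne_zero.mpr hcne)
    simpa using this
end

section
/- Let a ∈ ℂ with 0 < |a| < 1, and let ω_a = (1 − √(1 − |a|²))/conj(a) be the fixed point of φ_a in the open unit disk. Then for every z ∈ ℂ with |z| < 1, φ_{ω_a}(φ_a(z)) = −φ_{ω_a}(z). -/
open Complex

/-- For `0 < |a| < 1` with `ω_a` the fixed point of `φ_a` in the disk, one has
`φ_{ω_a}(φ_a(z)) = −φ_{ω_a}(z)` for all `z` in the open unit disk. -/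
theorem stmt_9 (a : ℂ) (ha0 : 0 < ‖a‖) (ha1 : ‖a‖ < 1)
    (φ : ℂ → ℂ → ℂ) (hφ : ∀ b z : ℂ, φ b z = (b - z) / (1 - (starRingEnd ℂ) b * z))
    (ω : ℂ) (hω : ω = (1 - (Real.sqrt (1 - ‖a‖ ^ 2) : ℂ)) / (starRingEnd ℂ) a) :
    ∀ z : ℂ, ‖z‖ < 1 → φ ω (φ a z) = -φ ω z := by
  intro z hz
  set s : ℝ := Real.sqrt (1 - ‖a‖ ^ 2) with hs
  have h1a : (0:ℝ) < 1 - ‖a‖ ^ 2 := by nlinarith [norm_nonneg a]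
  have hs2 : s ^ 2 = 1 - ‖a‖ ^ 2 := Real.sq_sqrt h1a.le
  have hs0 : 0 < s := Real.sqrt_pos.mpr h1a
  have hs1 : s < 1 := by nlinarith
  have h1sa : 1 - s < ‖a‖ := by nlinarith
  have ha' : a ≠ 0 := by
    intro h; rw [h] at ha0; simp at ha0
  have hb' : (starRingEnd ℂ) a ≠ 0 := by
    simpa using ha'
  set t : ℂ := 1 - (s : ℂ) with htdef
  have hab : a * (starRingEnd ℂ) a = 1 - (s:ℂ)^2 := by
    rw [Complex.mul_conj, ← Complex.sq_norm,
      show (‖a‖ ^ 2 : ℝ) = 1 - s^2 by linarith]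
    push_cast; ring
  have hωt : ω = t / (starRingEnd ℂ) a := by rw [hω]
  have hcω : (starRingEnd ℂ) ω = t / a := by
    rw [hω]; simp [map_div₀, Complex.conj_ofReal, htdef]
  -- denominator 1 - conj a * z is nonzero
  have d1 : (1:ℂ) - (starRingEnd ℂ) a * z ≠ 0 := by
    intro h
    have h1 : (starRingEnd ℂ) a * z = 1 := by linear_combination -h
    have h2 : ‖(starRingEnd ℂ) a * z‖ = 1 := by rw [h1]; simp
    rw [norm_mul, Complex.norm_conj] at h2
    nlinarith [norm_nonneg z, norm_nonneg a]
  -- a - t * z is nonzero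
  have habs_t : ‖t‖ = 1 - s := by
    rw [htdef, show (1:ℂ) - (s:ℂ) = ((1 - s : ℝ) : ℂ) by push_cast; ring,
      Complex.norm_real, Real.norm_eq_abs, abs_of_pos (by linarith)]
  have hm : a - t * z ≠ 0 := by
    intro h
    have h1 : a = t * z := by linear_combination h
    have h2 : ‖a‖ = ‖t‖ * ‖z‖ := by rw [h1, norm_mul]
    rw [habs_t] at h2
    nlinarith [norm_nonneg z]
  have hsC : ((s:ℂ)) ≠ 0 := by exact_mod_cast hs0.ne'
  -- numerator identity
  have hnum : ω - (a - z) / (1 - (starRingEnd ℂ) a * z)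
      = (s:ℂ) * ((starRingEnd ℂ) a * z - t) / ((starRingEnd ℂ) a * (1 - (starRingEnd ℂ) a * z)) := by
    rw [hωt]
    field_simp
    ring_nf
    linear_combination (-1 : ℂ) * hab
  -- denominator identity
  have hden : 1 - (starRingEnd ℂ) ω * ((a - z) / (1 - (starRingEnd ℂ) a * z))
      = (s:ℂ) * (a - t * z) / (a * (1 - (starRingEnd ℂ) a * z)) := by
    rw [hcω]
    have d1' : 1 - z * (starRingEnd ℂ) a ≠ 0 := by rw [mul_comm]; exact d1
    field_simp
    ring_nf
    linear_combination (-z) * hab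
  have hR : -φ ω z = a * ((starRingEnd ℂ) a * z - t) / ((starRingEnd ℂ) a * (a - t * z)) := by
    rw [hφ, hcω, hωt]
    have d3 : 1 - t / a * z ≠ 0 := by
      have : 1 - t / a * z = (a - t * z) / a := by field_simp
      rw [this]; exact div_ne_zero hm ha'
    field_simp
    ring
  rw [hφ ω, hφ a, hnum, hden, hR]
  field_simp
end

section
/- Let a ∈ ℂ with 0 < |a| < 1, and let ω_a = (1 − √(1 − |a|²))/conj(a) be the fixed point of φ_a in the open unit disk. Then for every z ∈ ℂ with |z| < 1, φ_a(φ_{ω_a}(z)) = φ_{ω_a}(−z). -/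
open Complex

/-- For `0 < |a| < 1` with `ω_a` the fixed point of `φ_a` in the disk, one has
`φ_a(φ_{ω_a}(z)) = φ_{ω_a}(−z)` for all `z` in the open unit disk. -/
theorem stmt_10 (a : ℂ) (ha0 : 0 < ‖a‖) (ha1 : ‖a‖ < 1)
    (φ : ℂ → ℂ → ℂ) (hφ : ∀ b z : ℂ, φ b z = (b - z) / (1 - (starRingEnd ℂ) b * z))
    (ω : ℂ) (hω : ω = (1 - (Real.sqrt (1 - ‖a‖ ^ 2) : ℂ)) / (starRingEnd ℂ) a) :
    ∀ z : ℂ, ‖z‖ < 1 → φ a (φ ω z) = φ ω (-z) := by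
  set s : ℝ := Real.sqrt (1 - ‖a‖ ^ 2) with hs
  have ha : a ≠ 0 := by simpa using ha0.ne'
  have hc : (starRingEnd ℂ) a ≠ 0 := by simpa using ha
  have hs2 : s ^ 2 = 1 - ‖a‖ ^ 2 := Real.sq_sqrt (by nlinarith)
  have hspos : 0 < s := Real.sqrt_pos.mpr (by nlinarith)
  have hslt : s < 1 := by nlinarith
  have hac : a * (starRingEnd ℂ) a = 1 - (s : ℂ) ^ 2 := by
    rw [Complex.mul_conj]
    have : Complex.normSq a = ‖a‖ ^ 2 := by rw [Complex.sq_norm]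
    rw [this]
    exact_mod_cast congrArg (Complex.ofReal) (by linarith : ‖a‖^2 = 1 - s^2)
  have hcω : (starRingEnd ℂ) ω = (1 - (s : ℂ)) / a := by
    rw [hω]
    rw [map_div₀, map_sub, map_one, Complex.conj_conj, Complex.conj_ofReal]
  -- fixed point identities
  have hA : a = 2 * ω - (starRingEnd ℂ) a * ω ^ 2 := by
    rw [hω]; field_simp; linear_combination hac
  have hB : (starRingEnd ℂ) a = 2 * (starRingEnd ℂ) ω - a * ((starRingEnd ℂ) ω) ^ 2 := by
    rw [hcω]; field_simp; linear_combination hac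
  -- |ω| < 1
  have habsω : ‖ω‖ < 1 := by
    rw [hω]
    rw [norm_div, Complex.norm_conj]
    have h1 : ‖(1 - (s:ℂ))‖ = 1 - s := by
      rw [show (1 - (s:ℂ)) = ((1 - s : ℝ) : ℂ) by push_cast; ring, Complex.norm_real, Real.norm_eq_abs]
      exact abs_of_nonneg (by linarith)
    rw [h1, div_lt_one ha0]
    nlinarith
  intro z hz
  have hzω : ‖(starRingEnd ℂ) ω * z‖ < 1 := by
    rw [norm_mul, Complex.norm_conj]
    calc ‖ω‖ * ‖z‖ ≤ ‖ω‖ * 1 :=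
          mul_le_mul_of_nonneg_left hz.le (norm_nonneg _)
      _ < 1 := by simpa using habsω
  have h1 : (1 : ℂ) - (starRingEnd ℂ) ω * z ≠ 0 := by
    intro h
    have : (1:ℂ) = (starRingEnd ℂ) ω * z := by linear_combination h
    rw [← this] at hzω; simp at hzω
  have h2 : (1 : ℂ) - (starRingEnd ℂ) ω * (-z) ≠ 0 := by
    intro h
    have h' : (starRingEnd ℂ) ω * z = -1 := by linear_combination h
    rw [h'] at hzω
    simp at hzω
  -- the full denominator
  have hD : (1 - (starRingEnd ℂ) ω * z) - (starRingEnd ℂ) a * (ω - z) ≠ 0 := by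
    have key : (1 - (starRingEnd ℂ) ω * z) - (starRingEnd ℂ) a * (ω - z)
        = (s : ℂ) + ((starRingEnd ℂ) a - (starRingEnd ℂ) ω) * z := by
      have hcaω : (starRingEnd ℂ) a * ω = 1 - (s:ℂ) := by
        rw [hω]; field_simp
      linear_combination -hcaω
    rw [key]
    intro h
    have hdiff : ‖(starRingEnd ℂ) a - (starRingEnd ℂ) ω‖ = s * ‖ω‖ := by
      have e : (starRingEnd ℂ) a - (starRingEnd ℂ) ω = (s:ℂ) * (starRingEnd ℂ) ω := by
        rw [hcω]; field_simp; linear_combination hac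
      rw [e, norm_mul, Complex.norm_real, Real.norm_eq_abs, abs_of_pos hspos, Complex.norm_conj]
    have habs : ‖((starRingEnd ℂ) a - (starRingEnd ℂ) ω) * z‖ < s := by
      rw [norm_mul, hdiff]
      calc s * ‖ω‖ * ‖z‖ ≤ s * ‖ω‖ * 1 :=
            mul_le_mul_of_nonneg_left hz.le (by positivity)
        _ < s := by nlinarith [norm_nonneg ω]
    have : ((starRingEnd ℂ) a - (starRingEnd ℂ) ω) * z = -(s:ℂ) := by linear_combination h
    rw [this] at habs
    simp [abs_of_pos hspos] at habs
  rw [hφ, hφ, hφ]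
  have hD' : 1 - (starRingEnd ℂ) a * ((ω - z) / (1 - (starRingEnd ℂ) ω * z)) ≠ 0 := by
    intro h
    apply hD
    have e : 1 - (starRingEnd ℂ) ω * z - (starRingEnd ℂ) a * (ω - z)
        = (1 - (starRingEnd ℂ) ω * z) * (1 - (starRingEnd ℂ) a * ((ω - z) / (1 - (starRingEnd ℂ) ω * z))) := by
      field_simp
    rw [e, h, mul_zero]
  rw [div_eq_div_iff hD' h2]
  field_simp [show (1:ℂ) - z * (starRingEnd ℂ) ω ≠ 0 by rwa [mul_comm]]
  ring_nf
  linear_combination hA - (z^2) * hB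
end

section
/- Let H be a complex Hilbert space and let T be a bounded linear operator on H with T² = I (a reflection). Then T*T is a positive invertible operator, and the unitary part ρ = T (T*T)^{−1/2} of the polar decomposition of T is a symmetry intertwining T and T*: ρ* = ρ, ρ² = I, and ρ T ρ = T*. -/
open ContinuousLinearMap

set_option maxHeartbeats 1000000 in
set_option synthInstance.maxHeartbeats 1000000 in
/-- If `T² = I` on a complex Hilbert space, then `T*T` is positive and invertible, and the
unitary part `ρ = T(T*T)^{−1/2}` of the polar decomposition of `T` is a symmetry
intertwining `T` and `T*`: `ρ* = ρ`, `ρ² = I` and `ρTρ = T*`. -/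
theorem stmt_12 {H : Type*} [NormedAddCommGroup H] [InnerProductSpace ℂ H] [CompleteSpace H]
    (T : H →L[ℂ] H) (hT : T * T = 1) :
    (ContinuousLinearMap.adjoint T * T).IsPositive ∧
    IsUnit (ContinuousLinearMap.adjoint T * T) ∧
    ∀ ρ : H →L[ℂ] H,
      ρ = T * cfc (fun x : ℝ => (Real.sqrt x)⁻¹) (ContinuousLinearMap.adjoint T * T) →
        ContinuousLinearMap.adjoint ρ = ρ ∧ ρ * ρ = 1 ∧
          ρ * T * ρ = ContinuousLinearMap.adjoint T := by
  set S := ContinuousLinearMap.adjoint T with hSdef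
  have hS : S * S = 1 := by
    have h := congrArg star hT
    rw [star_mul, star_one] at h
    simpa [hSdef, star_eq_adjoint] using h
  set A := S * T with hAdef
  -- positivity
  have hA_pos : A.IsPositive := by
    have h := (isPositive_one (E := H) (𝕜 := ℂ)).adjoint_conj T
    rw [hAdef, hSdef, mul_def]
    simpa [one_def] using h
  have hA0 : (0 : H →L[ℂ] H) ≤ A := (nonneg_iff_isPositive A).mpr hA_pos
  have hA_sa : IsSelfAdjoint A := hA_pos.isSelfAdjoint
  -- invertibility
  have hAinv1 : A * (T * S) = 1 := by
    rw [hAdef, mul_assoc, ← mul_assoc T T S, hT, one_mul, hS]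
  have hAinv2 : (T * S) * A = 1 := by
    rw [hAdef, mul_assoc, ← mul_assoc S S T, hS, one_mul, hT]
  have hA_unit : IsUnit A := ⟨⟨A, T * S, hAinv1, hAinv2⟩, rfl⟩
  -- spectrum of A is contained in (0, ∞)
  have hspec : ∀ x ∈ spectrum ℝ A, 0 < x := by
    intro x hx
    have h0 : 0 ≤ x :=
      (StarOrderedRing.nonneg_iff_spectrum_nonneg (R := ℝ) A hA_sa).mp hA0 x hx
    rcases h0.lt_or_eq with h | h
    · exact h
    · exact absurd (h ▸ hx) (spectrum.zero_notMem ℝ hA_unit)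
  have hfc : ContinuousOn (fun x : ℝ => (Real.sqrt x)⁻¹) (spectrum ℝ A) :=
    Real.continuous_sqrt.continuousOn.inv₀
      (fun x hx => ne_of_gt (Real.sqrt_pos.mpr (hspec x hx)))
  have hgc : ContinuousOn Real.sqrt (spectrum ℝ A) := Real.continuous_sqrt.continuousOn
  set F := cfc (fun x : ℝ => (Real.sqrt x)⁻¹) A with hFdef
  have hFsa : IsSelfAdjoint F := IsSelfAdjoint.cfc
  have hF0 : (0 : H →L[ℂ] H) ≤ F :=
    cfc_nonneg fun x hx => inv_nonneg.mpr (Real.sqrt_nonneg x)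
  set B := cfc Real.sqrt A with hBdef
  have hB0 : (0 : H →L[ℂ] H) ≤ B := cfc_nonneg fun x hx => Real.sqrt_nonneg x
  -- key cfc identities
  have hFAF : F * A * F = 1 := by
    rw [← cfc_id ℝ A hA_sa] -- middle A
    rw [hFdef]
    rw [← cfc_mul _ _ A hfc continuousOn_id, ← cfc_mul (fun x : ℝ => (Real.sqrt x)⁻¹ * _root_.id x) _ A (hfc.mul continuousOn_id) hfc]
    calc cfc (fun x : ℝ => ((Real.sqrt x)⁻¹ * _root_.id x) * (Real.sqrt x)⁻¹) A
        = cfc (fun _ : ℝ => (1 : ℝ)) A := by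
          apply cfc_congr
          intro x hx
          have hx0 : 0 < x := hspec x hx
          have hs : Real.sqrt x * Real.sqrt x = x := Real.mul_self_sqrt hx0.le
          have hsne : Real.sqrt x ≠ 0 := ne_of_gt (Real.sqrt_pos.mpr hx0)
          show ((Real.sqrt x)⁻¹ * x) * (Real.sqrt x)⁻¹ = 1
          field_simp
          rw [sq, hs]
      _ = 1 := cfc_const_one ℝ A hA_sa
  have hFF : F * F = T * S := by
    have h2 : F * F * A = 1 := by
      rw [show F * F * A = F * F * cfc (id : ℝ → ℝ) A from by rw [cfc_id ℝ A hA_sa]]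
      rw [hFdef]
      rw [← cfc_mul _ _ A hfc hfc, ← cfc_mul (fun x : ℝ => (Real.sqrt x)⁻¹ * (Real.sqrt x)⁻¹) _ A (hfc.mul hfc) continuousOn_id]
      calc cfc (fun x : ℝ => ((Real.sqrt x)⁻¹ * (Real.sqrt x)⁻¹) * _root_.id x) A
          = cfc (fun _ : ℝ => (1 : ℝ)) A := by
            apply cfc_congr
            intro x hx
            have hx0 : 0 < x := hspec x hx
            have hs : Real.sqrt x * Real.sqrt x = x := Real.mul_self_sqrt hx0.le
            have hsne : Real.sqrt x ≠ 0 := ne_of_gt (Real.sqrt_pos.mpr hx0)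
            show ((Real.sqrt x)⁻¹ * (Real.sqrt x)⁻¹) * x = 1
            field_simp
            rw [sq, hs]
        _ = 1 := cfc_const_one ℝ A hA_sa
    calc F * F = (F * F) * (A * (T * S)) := by rw [hAinv1, mul_one]
      _ = ((F * F) * A) * (T * S) := (mul_assoc _ _ _).symm
      _ = T * S := by rw [h2, one_mul]
  have hB2 : B * B = A := by
    rw [hBdef, ← cfc_mul _ _ A hgc hgc]
    calc cfc (fun x : ℝ => Real.sqrt x * Real.sqrt x) A
        = cfc (id : ℝ → ℝ) A := cfc_congr fun x hx => Real.mul_self_sqrt (hspec x hx).le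
      _ = A := cfc_id ℝ A hA_sa
  have hBF : B * F = 1 := by
    rw [hBdef, hFdef, ← cfc_mul _ _ A hgc hfc]
    calc cfc (fun x : ℝ => Real.sqrt x * (Real.sqrt x)⁻¹) A
        = cfc (fun _ : ℝ => (1 : ℝ)) A := cfc_congr fun x hx =>
            mul_inv_cancel₀ (ne_of_gt (Real.sqrt_pos.mpr (hspec x hx)))
      _ = 1 := cfc_const_one ℝ A hA_sa
  refine ⟨hA_pos, hA_unit, ?_⟩
  intro ρ hρ
  have hρ_adj : ContinuousLinearMap.adjoint ρ = F * S := by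
    calc ContinuousLinearMap.adjoint ρ = star ρ := (star_eq_adjoint ρ).symm
      _ = star (T * F) := by rw [hρ]
      _ = star F * star T := star_mul _ _
      _ = F * S := by rw [hFsa.star_eq, star_eq_adjoint]
  have hρF : ρ * F = S := by
    rw [hρ, mul_assoc, hFF, ← mul_assoc, hT, one_mul]
  have hρadρ : ContinuousLinearMap.adjoint ρ * ρ = 1 := by
    rw [hρ_adj, hρ, mul_assoc, ← mul_assoc S T F, ← hAdef, ← mul_assoc, hFAF]
  -- P = ρ F ρ* is a nonneg square root of A, hence equals B
  have hP0 : (0 : H →L[ℂ] H) ≤ ρ * F * ContinuousLinearMap.adjoint ρ := by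
    rw [nonneg_iff_isPositive]
    have h := ((nonneg_iff_isPositive F).mp hF0).conj_adjoint ρ
    simpa only [← mul_def, ← mul_assoc] using h
  have hP2 : (ρ * F * ContinuousLinearMap.adjoint ρ) * (ρ * F * ContinuousLinearMap.adjoint ρ)
      = A := by
    rw [hρF, hρ_adj]
    simp only [← mul_assoc]
    rw [mul_assoc (S * F) S S, hS, mul_one, mul_assoc S F F, hFF,
      ← mul_assoc S T S, mul_assoc (S * T) S S, hS, mul_one]
  have hPB : ρ * F * ContinuousLinearMap.adjoint ρ = B :=
    (CFC.sqrt_unique hP2 hP0).symm.trans (CFC.sqrt_unique hB2 hB0)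
  have h3 : F * ContinuousLinearMap.adjoint ρ = ContinuousLinearMap.adjoint ρ * B := by
    calc F * ContinuousLinearMap.adjoint ρ
        = (ContinuousLinearMap.adjoint ρ * ρ) * (F * ContinuousLinearMap.adjoint ρ) := by
          rw [hρadρ, one_mul]
      _ = ContinuousLinearMap.adjoint ρ * (ρ * F * ContinuousLinearMap.adjoint ρ) := by
          simp only [mul_assoc]
      _ = ContinuousLinearMap.adjoint ρ * B := by rw [hPB]
  have h4 : ρ = F * ContinuousLinearMap.adjoint ρ * F := by
    rw [hρ_adj, ← mul_assoc F F S, hFF, mul_assoc T S S, hS, mul_one, hρ]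
  have hsym : ContinuousLinearMap.adjoint ρ = ρ := by
    calc ContinuousLinearMap.adjoint ρ
        = ContinuousLinearMap.adjoint ρ * (B * F) := by rw [hBF, mul_one]
      _ = (ContinuousLinearMap.adjoint ρ * B) * F := (mul_assoc _ _ _).symm
      _ = (F * ContinuousLinearMap.adjoint ρ) * F := by rw [h3]
      _ = ρ := h4.symm
  refine ⟨hsym, ?_, ?_⟩
  · calc ρ * ρ = ContinuousLinearMap.adjoint ρ * ρ := by rw [hsym]
      _ = 1 := hρadρ
  · rw [hρ, mul_assoc (T * F) T (T * F), ← mul_assoc T T F, hT, one_mul,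
      mul_assoc T F F, hFF, ← mul_assoc, hT, one_mul]
end

section
/- Let H be a complex Hilbert space, let T be a bounded linear operator on H with T² = I, and let ρ = T (T*T)^{−1/2} be the unitary part of the polar decomposition of T. Let W be a symmetry on H (W* = W and W² = I) such that Wρ commutes with T*T. Then W ρ T = T ρ W, W ρ T* = T* ρ W, and (T*T) W = W (T*T)^{−1}. -/
open ContinuousLinearMap

/-- Conjugation by a unitary operator, as a star algebra homomorphism. -/
noncomputable def conjSAH {H : Type*} [NormedAddCommGroup H] [InnerProductSpace ℂ H]
    [CompleteSpace H] (u : H →L[ℂ] H) (h1 : star u * u = 1) (h2 : u * star u = 1) :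
    (H →L[ℂ] H) →⋆ₐ[ℂ] (H →L[ℂ] H) where
  toFun x := u * x * star u
  map_one' := by simpa using h2
  map_mul' x y := by
    simp only [mul_assoc]
    rw [← mul_assoc (star u) u, h1, one_mul]
  map_zero' := by simp
  map_add' x y := by simp [mul_add, add_mul]
  commutes' c := by
    simp only [Algebra.algebraMap_eq_smul_one]
    simp [mul_smul_comm, smul_mul_assoc, h2]
  map_star' x := by simp only [star_mul, star_star, mul_assoc]

lemma conjSAH_cont {H : Type*} [NormedAddCommGroup H] [InnerProductSpace ℂ H]
    [CompleteSpace H] (u : H →L[ℂ] H) (h1 : star u * u = 1) (h2 : u * star u = 1) :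
    Continuous (conjSAH u h1 h2) := by
  show Continuous fun x => u * x * star u
  fun_prop

lemma conj_cfc {H : Type*} [NormedAddCommGroup H] [InnerProductSpace ℂ H] [CompleteSpace H]
    (u A : H →L[ℂ] H) (h1 : star u * u = 1) (h2 : u * star u = 1)
    (hA : IsSelfAdjoint A) (f : ℝ → ℝ) (hf : ContinuousOn f (spectrum ℝ A)) :
    u * cfc f A * star u = cfc f (u * A * star u) := by
  have hsa : IsSelfAdjoint (u * A * star u) := by
    rw [IsSelfAdjoint, star_mul, star_mul, star_star, hA.star_eq, mul_assoc]
  exact StarAlgHomClass.map_cfc (conjSAH u h1 h2) f A hf (conjSAH_cont u h1 h2) hA hsa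

section Aux

variable {M : Type*} [Monoid M]

/-- Auxiliary pure-algebra facts: the unitary part of a reflection is unitary. -/
lemma aux_rho_unitary (T Ts ρ ρs A B : M)
    (hT : T * T = 1) (hTs : Ts * Ts = 1)
    (hA : A = Ts * T) (hρ : ρ = T * B) (hρs : ρs = B * Ts)
    (hBBA : B * B * A = 1) (hABc : A * B = B * A) :
    ρ * ρs = 1 ∧ ρs * ρ = 1 := by
  have hBAB : B * (A * B) = 1 := by rw [hABc, ← mul_assoc, hBBA]
  have hATTs : A * (T * Ts) = 1 := by
    calc A * (T * Ts) = Ts * ((T * T) * Ts) := by rw [hA]; simp [mul_assoc]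
    _ = 1 := by rw [hT, one_mul, hTs]
  have hBB : B * B = T * Ts := by
    calc B * B = B * B * (A * (T * Ts)) := by rw [hATTs, mul_one]
    _ = (B * B * A) * (T * Ts) := by simp [mul_assoc]
    _ = T * Ts := by rw [hBBA, one_mul]
  constructor
  · calc ρ * ρs = T * ((B * B) * Ts) := by rw [hρ, hρs]; simp [mul_assoc]
    _ = T * (T * (Ts * Ts)) := by rw [hBB]; simp [mul_assoc]
    _ = 1 := by rw [hTs, mul_one, hT]
  · calc ρs * ρ = B * ((Ts * T) * B) := by rw [hρ, hρs]; simp [mul_assoc]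
    _ = B * (A * B) := by rw [hA]
    _ = 1 := hBAB

/-- Auxiliary pure-algebra core of the theorem. -/
lemma aux_key (T Ts ρ ρs W A B : M)
    (hT : T * T = 1) (hTs : Ts * Ts = 1)
    (hA : A = Ts * T) (hρ : ρ = T * B) (hρs : ρs = B * Ts)
    (hBBA : B * B * A = 1) (hABc : A * B = B * A)
    (hcomm : (W * ρ) * A = A * (W * ρ))
    (hSB : (W * ρ) * B = B * (W * ρ)) :
    W * ρ * T = T * ρ * W ∧ W * ρ * Ts = Ts * ρ * W ∧ A * W = W * (T * Ts) := by
  obtain ⟨hρρs, hρsρ⟩ := aux_rho_unitary T Ts ρ ρs A B hT hTs hA hρ hρs hBBA hABc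
  have hBAB : B * (A * B) = 1 := by rw [hABc, ← mul_assoc, hBBA]
  have hTρ : T * ρ = B := by rw [hρ, ← mul_assoc, hT, one_mul]
  have hρAρs : ρ * A * ρs = T * Ts := by
    calc ρ * A * ρs = T * (B * (A * B)) * Ts := by rw [hρ, hρs]; simp [mul_assoc]
    _ = T * Ts := by rw [hBAB, mul_one]
  have goal3 : A * W = W * (T * Ts) := by
    calc A * W = A * W * (ρ * ρs) := by rw [hρρs, mul_one]
    _ = (A * (W * ρ)) * ρs := by simp [mul_assoc]
    _ = ((W * ρ) * A) * ρs := by rw [hcomm]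
    _ = W * (ρ * A * ρs) := by simp [mul_assoc]
    _ = W * (T * Ts) := by rw [hρAρs]
  have hWTeq : W * T = (W * ρ) * (A * B) := by
    have h : (W * ρ) * (A * B) = W * T := by
      calc (W * ρ) * (A * B) = W * T * (B * (A * B)) := by rw [hρ]; simp [mul_assoc]
      _ = W * T := by rw [hBAB, mul_one]
    exact h.symm
  have hBWT : B * (W * T) = W * ρ := by
    calc B * (W * T) = (B * (W * ρ)) * (A * B) := by rw [hWTeq]; simp [mul_assoc]
    _ = ((W * ρ) * B) * (A * B) := by rw [hSB]
    _ = (W * ρ) * (B * (A * B)) := by simp [mul_assoc]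
    _ = W * ρ := by rw [hBAB, mul_one]
  have hST : (W * ρ) * T = B * W := by
    calc (W * ρ) * T = (B * (W * T)) * T := by rw [hBWT]
    _ = B * (W * (T * T)) := by simp [mul_assoc]
    _ = B * W := by rw [hT, mul_one]
  have hATs : A * T = Ts := by rw [hA, mul_assoc, hT, mul_one]
  refine ⟨?_, ?_, goal3⟩
  · calc W * ρ * T = B * W := hST
    _ = (T * ρ) * W := by rw [hTρ]
  · calc W * ρ * Ts = (W * ρ) * (A * T) := by rw [hATs]
    _ = ((W * ρ) * A) * T := by simp [mul_assoc]
    _ = (A * (W * ρ)) * T := by rw [hcomm]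
    _ = A * ((W * ρ) * T) := by simp [mul_assoc]
    _ = A * (B * W) := by rw [hST]
    _ = (A * B) * W := by simp [mul_assoc]
    _ = (A * (T * ρ)) * W := by rw [hTρ]
    _ = ((A * T) * ρ) * W := by simp [mul_assoc]
    _ = Ts * ρ * W := by rw [hATs]

end Aux

set_option maxHeartbeats 1000000 in
/-- Let `T² = I` on a complex Hilbert space, `ρ = T(T*T)^{−1/2}` the unitary part of the
polar decomposition of `T`, and let `W` be a symmetry such that `Wρ` commutes with `T*T`.
Then `WρT = TρW`, `WρT* = T*ρW` and `(T*T)W = W(T*T)⁻¹`. -/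
theorem stmt_13 {H : Type*} [NormedAddCommGroup H] [InnerProductSpace ℂ H] [CompleteSpace H]
    (T : H →L[ℂ] H) (hT : T * T = 1)
    (ρ : H →L[ℂ] H)
    (hρ : ρ = T * cfc (fun x : ℝ => (Real.sqrt x)⁻¹) (ContinuousLinearMap.adjoint T * T))
    (W : H →L[ℂ] H) (hWsa : ContinuousLinearMap.adjoint W = W) (hW2 : W * W = 1)
    (hcomm : Commute (W * ρ) (ContinuousLinearMap.adjoint T * T)) :
    W * ρ * T = T * ρ * W ∧
    W * ρ * ContinuousLinearMap.adjoint T = ContinuousLinearMap.adjoint T * ρ * W ∧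
    (ContinuousLinearMap.adjoint T * T) * W =
      W * Ring.inverse (ContinuousLinearMap.adjoint T * T) := by
  have hstarT : star T = adjoint T := rfl
  have hT' : adjoint T * adjoint T = 1 := by
    simpa [star_mul, hstarT] using congrArg star hT
  have hAsa : IsSelfAdjoint (adjoint T * T) := by
    rw [IsSelfAdjoint, star_mul, hstarT, star_eq_adjoint, adjoint_adjoint]
  have hApos : (0 : H →L[ℂ] H) ≤ adjoint T * T := by
    simpa [hstarT] using star_mul_self_nonneg T
  -- invertibility of A = adjoint T * T
  have hAd : (adjoint T * T) * (T * adjoint T) = 1 := by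
    have h : (adjoint T * T) * (T * adjoint T) = adjoint T * ((T * T) * adjoint T) := by
      simp [mul_assoc]
    rw [h, hT, one_mul, hT']
  have hDA : (T * adjoint T) * (adjoint T * T) = 1 := by
    have h : (T * adjoint T) * (adjoint T * T) = T * ((adjoint T * adjoint T) * T) := by
      simp [mul_assoc]
    rw [h, hT', one_mul, hT]
  have hAu : IsUnit (adjoint T * T) := ⟨⟨adjoint T * T, T * adjoint T, hAd, hDA⟩, rfl⟩
  have hRinv : Ring.inverse (adjoint T * T) = T * adjoint T :=
    Ring.inverse_unit (⟨adjoint T * T, T * adjoint T, hAd, hDA⟩ : (H →L[ℂ] H)ˣ)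
  -- spectrum of A is positive
  have hspec : ∀ x ∈ spectrum ℝ (adjoint T * T), 0 < x := by
    intro x hx
    refine (spectrum_nonneg_of_nonneg hApos hx).lt_of_ne' ?_
    intro h0
    exact spectrum.zero_notMem ℝ hAu (h0 ▸ hx)
  have hg : ContinuousOn (fun x : ℝ => (Real.sqrt x)⁻¹) (spectrum ℝ (adjoint T * T)) := by
    intro x hx
    have hx0 : Real.sqrt x ≠ 0 := (Real.sqrt_pos.mpr (hspec x hx)).ne'
    exact (Real.continuous_sqrt.continuousAt.inv₀ hx0).continuousWithinAt
  have hBsa : IsSelfAdjoint (cfc (fun x : ℝ => (Real.sqrt x)⁻¹) (adjoint T * T)) :=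
    cfc_predicate _ _
  -- B * B * A = 1
  have hcfc1 : cfc (fun x : ℝ => (Real.sqrt x)⁻¹ * (Real.sqrt x)⁻¹ * x) (adjoint T * T) = 1 := by
    rw [← cfc_one (R := ℝ) (adjoint T * T)]
    refine cfc_congr fun x hx => ?_
    have hx0 := hspec x hx
    have hs : Real.sqrt x * Real.sqrt x = x := Real.mul_self_sqrt hx0.le
    have hsne : Real.sqrt x ≠ 0 := (Real.sqrt_pos.mpr hx0).ne'
    show (Real.sqrt x)⁻¹ * (Real.sqrt x)⁻¹ * x = 1
    have hx' : (Real.sqrt x)⁻¹ * (Real.sqrt x)⁻¹ * x =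
        (Real.sqrt x)⁻¹ * (Real.sqrt x)⁻¹ * (Real.sqrt x * Real.sqrt x) := by rw [hs]
    rw [hx']
    field_simp
  have hBBA : cfc (fun x : ℝ => (Real.sqrt x)⁻¹) (adjoint T * T) *
      cfc (fun x : ℝ => (Real.sqrt x)⁻¹) (adjoint T * T) * (adjoint T * T) = 1 := by
    have h1 : cfc (fun x : ℝ => (Real.sqrt x)⁻¹ * (Real.sqrt x)⁻¹ * x) (adjoint T * T) =
        cfc (fun x : ℝ => (Real.sqrt x)⁻¹ * (Real.sqrt x)⁻¹) (adjoint T * T) *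
          cfc (fun x : ℝ => x) (adjoint T * T) :=
      cfc_mul _ _ (adjoint T * T) (hg.mul hg) continuousOn_id
    have h2 : cfc (fun x : ℝ => (Real.sqrt x)⁻¹ * (Real.sqrt x)⁻¹) (adjoint T * T) =
        cfc (fun x : ℝ => (Real.sqrt x)⁻¹) (adjoint T * T) *
          cfc (fun x : ℝ => (Real.sqrt x)⁻¹) (adjoint T * T) :=
      cfc_mul _ _ (adjoint T * T) hg hg
    rw [h1, h2, cfc_id' (R := ℝ) (adjoint T * T)] at hcfc1
    exact hcfc1
  have hABc : (adjoint T * T) * cfc (fun x : ℝ => (Real.sqrt x)⁻¹) (adjoint T * T) =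
      cfc (fun x : ℝ => (Real.sqrt x)⁻¹) (adjoint T * T) * (adjoint T * T) := by
    have h := cfc_commute_cfc (id : ℝ → ℝ) (fun x : ℝ => (Real.sqrt x)⁻¹) (adjoint T * T)
    rw [cfc_id (R := ℝ) (adjoint T * T)] at h
    exact h.eq
  -- unitarity of ρ and S = W * ρ
  obtain ⟨hρρs, hρsρ⟩ := aux_rho_unitary T (adjoint T) ρ
    (cfc (fun x : ℝ => (Real.sqrt x)⁻¹) (adjoint T * T) * adjoint T)
    (adjoint T * T) (cfc (fun x : ℝ => (Real.sqrt x)⁻¹) (adjoint T * T))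
    hT hT' rfl hρ rfl hBBA hABc
  have hρstar : star ρ = cfc (fun x : ℝ => (Real.sqrt x)⁻¹) (adjoint T * T) * adjoint T := by
    rw [hρ, star_mul, hstarT, hBsa.star_eq]
  have hWst : star W = W := by rw [← star_eq_adjoint] at hWsa; exact hWsa
  have hSstar : star (W * ρ) = star ρ * W := by rw [star_mul, hWst]
  have hS1 : star (W * ρ) * (W * ρ) = 1 := by
    rw [hSstar]
    calc star ρ * W * (W * ρ) = star ρ * ((W * W) * ρ) := by simp [mul_assoc]
    _ = star ρ * ρ := by rw [hW2, one_mul]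
    _ = 1 := by rw [hρstar]; exact hρsρ
  have hS2 : (W * ρ) * star (W * ρ) = 1 := by
    rw [hSstar]
    calc W * ρ * (star ρ * W) = W * ((ρ * star ρ) * W) := by simp [mul_assoc]
    _ = W * (1 * W) := by rw [hρstar, hρρs]
    _ = 1 := by rw [one_mul, hW2]
  -- S commutes with B via the conjugation star-homomorphism
  have hSAS : (W * ρ) * (adjoint T * T) * star (W * ρ) = adjoint T * T := by
    calc (W * ρ) * (adjoint T * T) * star (W * ρ)
        = ((adjoint T * T) * (W * ρ)) * star (W * ρ) := by rw [hcomm.eq]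
    _ = (adjoint T * T) * ((W * ρ) * star (W * ρ)) := by rw [mul_assoc]
    _ = adjoint T * T := by rw [hS2, mul_one]
  have hSBS : (W * ρ) * cfc (fun x : ℝ => (Real.sqrt x)⁻¹) (adjoint T * T) * star (W * ρ) =
      cfc (fun x : ℝ => (Real.sqrt x)⁻¹) (adjoint T * T) := by
    have h := conj_cfc (W * ρ) (adjoint T * T) hS1 hS2 hAsa _ hg
    rw [hSAS] at h
    exact h
  have hSB : (W * ρ) * cfc (fun x : ℝ => (Real.sqrt x)⁻¹) (adjoint T * T) =
      cfc (fun x : ℝ => (Real.sqrt x)⁻¹) (adjoint T * T) * (W * ρ) := by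
    calc (W * ρ) * cfc (fun x : ℝ => (Real.sqrt x)⁻¹) (adjoint T * T)
        = ((W * ρ) * cfc (fun x : ℝ => (Real.sqrt x)⁻¹) (adjoint T * T)) *
            (star (W * ρ) * (W * ρ)) := by rw [hS1, mul_one]
    _ = ((W * ρ) * cfc (fun x : ℝ => (Real.sqrt x)⁻¹) (adjoint T * T) * star (W * ρ)) *
            (W * ρ) := by simp [mul_assoc]
    _ = _ := by rw [hSBS]
  obtain ⟨g1, g2, g3⟩ := aux_key T (adjoint T) ρ
    (cfc (fun x : ℝ => (Real.sqrt x)⁻¹) (adjoint T * T) * adjoint T)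
    W (adjoint T * T) (cfc (fun x : ℝ => (Real.sqrt x)⁻¹) (adjoint T * T))
    hT hT' rfl hρ rfl hBBA hABc hcomm.eq hSB
  refine ⟨g1, g2, ?_⟩
  rw [hRinv]
  exact g3
end
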